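/- Let ℓ ≥ 1, let γ = (1,2,...,2ℓ) be the full cycle in the symmetric group S_{2ℓ}, and let π be a pair partition of {1,...,2ℓ} regarded as an involutive permutation. Then the number of cycles of γ∘π satisfies #(γ∘π) ≤ ℓ + 1, with equality if and only if π is a non-crossing pair partition. -/

import Mathlib

/-- A pair partition of `{1, …, m}`, regarded as a fixed-point-free involution. -/
def IsPairing {m : ℕ} (π : Equiv.Perm (Fin m)) : Prop :=
  π * π = 1 ∧ ∀ i, π i ≠ i

/-- A pair partition is non-crossing if there are no blocks `{a, c}` and `{b, d}`
with `a < b < c < d`. -/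
def IsNonCrossingPairing {m : ℕ} (π : Equiv.Perm (Fin m)) : Prop :=
  ¬ ∃ a b c d : Fin m, a < b ∧ b < c ∧ c < d ∧ π a = c ∧ π b = d

/-- The number of cycles of a permutation of `Fin n` (fixed points count as cycles). -/
def numCycles {n : ℕ} (σ : Equiv.Perm (Fin n)) : ℕ :=
  Multiset.card σ.cycleType + (n - σ.support.card)

open Equiv Equiv.Perm Finset

variable {n : ℕ}

section Aux

def scSetoid (σ : Perm (Fin n)) : Setoid (Fin n) :=
  ⟨σ.SameCycle, ⟨SameCycle.refl σ, SameCycle.symm, SameCycle.trans⟩⟩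

instance (σ : Perm (Fin n)) : DecidableRel (scSetoid σ).r := fun x y =>
  inferInstanceAs (Decidable (σ.SameCycle x y))

instance (σ : Perm (Fin n)) : Fintype (Quotient (scSetoid σ)) :=
  @Quotient.fintype _ _ (scSetoid σ) (fun x y => inferInstanceAs (Decidable (σ.SameCycle x y)))

noncomputable def nQuot (σ : Perm (Fin n)) : ℕ := Fintype.card (Quotient (scSetoid σ))

lemma sameCycle_eq_of_fixed {σ : Perm (Fin n)} {x y : Fin n} (h : σ.SameCycle x y)
    (hx : σ x = x) : y = x := by
  obtain ⟨i, rfl⟩ := h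
  exact zpow_apply_eq_self_of_apply_eq_self hx i

lemma numCycles_eq_nQuot (σ : Perm (Fin n)) : numCycles σ = nQuot σ := by
  classical
  have hcard : Multiset.card σ.cycleType = σ.cycleFactorsFinset.card := by
    rw [cycleType_def, Multiset.card_map]; rfl
  set g : Fin n → (σ.cycleFactorsFinset ⊕ {x : Fin n // x ∉ σ.support}) := fun x =>
    if h : x ∈ σ.support then Sum.inl ⟨σ.cycleOf x, cycleOf_mem_cycleFactorsFinset_iff.2 h⟩
    else Sum.inr ⟨x, h⟩ with hg
  have hresp : ∀ x y, σ.SameCycle x y → g x = g y := by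
    intro x y hxy
    by_cases hx : x ∈ σ.support
    · have hy : y ∈ σ.support := by
        by_contra hy
        rw [notMem_support] at hy
        have hxy' : x = y := sameCycle_eq_of_fixed hxy.symm hy
        exact (mem_support.1 hx) (by rw [hxy']; exact hy)
      simp only [hg, dif_pos hx, dif_pos hy]
      exact congrArg _ (Subtype.ext hxy.cycleOf_eq)
    · have : y = x := sameCycle_eq_of_fixed hxy (notMem_support.1 hx)
      subst this; rfl
  set G : Quotient (scSetoid σ) → (σ.cycleFactorsFinset ⊕ {x : Fin n // x ∉ σ.support}) :=
    Quotient.lift g hresp with hG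
  have hGbij : Function.Bijective G := by
    constructor
    · intro q q'
      induction q using Quotient.inductionOn with | _ x =>
      induction q' using Quotient.inductionOn with | _ y =>
      intro hxy
      simp only [hG, Quotient.lift_mk] at hxy
      change g x = g y at hxy
      apply Quotient.sound
      by_cases hx : x ∈ σ.support <;> by_cases hy : y ∈ σ.support <;>
        simp only [hg, dif_pos, dif_neg, hx, hy] at hxy
      · have h1 : Equiv.Perm.cycleOf σ x = Equiv.Perm.cycleOf σ y :=
          Subtype.ext_iff.1 (Sum.inl_injective hxy)
        have h2 : y ∈ (σ.cycleOf y).support := mem_support_cycleOf_iff.2 ⟨SameCycle.refl σ y, hy⟩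
        rw [← h1] at h2
        exact (mem_support_cycleOf_iff.1 h2).1
      · exact absurd hxy (by simp)
      · exact absurd hxy (by simp)
      · have : x = y := Subtype.ext_iff.1 (Sum.inr_injective hxy)
        exact this ▸ SameCycle.refl σ x
    · intro z
      rcases z with ⟨c, hc⟩ | ⟨x, hx⟩
      · obtain ⟨x, hcx, -⟩ := (mem_cycleFactorsFinset_iff.1 hc).1
        have hxc : x ∈ c.support := mem_support.2 hcx
        have hxs : x ∈ σ.support := by
          rw [mem_support, ← (mem_cycleFactorsFinset_iff.1 hc).2 x hxc]
          exact hcx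
        refine ⟨Quotient.mk _ x, ?_⟩
        simp only [hG, Quotient.lift_mk, hg, dif_pos hxs]
        exact congrArg _ (Subtype.ext (cycle_is_cycleOf hxc hc).symm)
      · refine ⟨Quotient.mk _ x, ?_⟩
        simp only [hG, Quotient.lift_mk, hg, dif_neg hx]
  have hcongr := Fintype.card_congr (Equiv.ofBijective G hGbij)
  unfold numCycles nQuot
  rw [hcongr, Fintype.card_sum, Fintype.card_coe, Fintype.card_subtype_compl,
    Fintype.card_coe, Fintype.card_fin, hcard]

end Aux

section Orbit

private lemma pow_succ_apply (f : Perm (Fin n)) (k : ℕ) (x : Fin n) :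
    (f ^ (k + 1)) x = f ((f ^ k) x) := by
  rw [pow_succ', mul_apply]

private lemma sameCycle_of_step {σ f : Perm (Fin n)} (hstep : ∀ z, σ.SameCycle z (f z))
    {x y : Fin n} (h : f.SameCycle x y) : σ.SameCycle x y := by
  obtain ⟨i, -, rfl⟩ := h.exists_pow_eq'
  clear h
  induction i with
  | zero => simpa using SameCycle.refl σ x
  | succ k ih =>
    rw [pow_succ_apply]
    exact ih.trans (hstep _)

private lemma sameCycle_mul_swap_refine {σ : Perm (Fin n)} {a b : Fin n}
    (hab : σ.SameCycle a b) {x y : Fin n}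
    (h : (σ * Equiv.swap a b).SameCycle x y) : σ.SameCycle x y := by
  refine sameCycle_of_step (fun z => ?_) h
  rw [mul_apply]
  rcases eq_or_ne z a with rfl | hza
  · rw [Equiv.swap_apply_left]
    exact hab.trans ⟨1, by simp⟩
  rcases eq_or_ne z b with rfl | hzb
  · rw [Equiv.swap_apply_right]
    exact hab.symm.trans ⟨1, by simp⟩
  · rw [Equiv.swap_apply_of_ne_of_ne hza hzb]
    exact ⟨1, by simp⟩

private lemma sameCycle_cover {σ : Perm (Fin n)} {a b x : Fin n}
    (h : σ.SameCycle a x) :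
    (σ * Equiv.swap a b).SameCycle a x ∨ (σ * Equiv.swap a b).SameCycle b x := by
  set f := σ * Equiv.swap a b with hf
  obtain ⟨i, -, rfl⟩ := h.exists_pow_eq'
  clear h
  induction i with
  | zero => left; simpa using SameCycle.refl f a
  | succ k ih =>
    rw [pow_succ_apply]
    set z := (σ ^ k) a with hz
    rcases eq_or_ne z a with hza | hza
    · right
      have h1 : σ z = f b := by rw [hza, hf, mul_apply, Equiv.swap_apply_right]
      rw [h1]; exact ⟨1, by simp⟩
    rcases eq_or_ne z b with hzb | hzb
    · left
      have h1 : σ z = f a := by rw [hzb, hf, mul_apply, Equiv.swap_apply_left]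
      rw [h1]; exact ⟨1, by simp⟩
    · have hfz : f z = σ z := by rw [hf, mul_apply, Equiv.swap_apply_of_ne_of_ne hza hzb]
      rcases ih with h' | h'
      · left; exact h'.trans (by rw [← hfz]; exact ⟨1, by simp⟩)
      · right; exact h'.trans (by rw [← hfz]; exact ⟨1, by simp⟩)

private lemma sameCycle_mul_swap_of_not_mem {σ : Perm (Fin n)} {a b x y : Fin n}
    (hab : σ.SameCycle a b)
    (hxa : ¬ σ.SameCycle x a) (h : σ.SameCycle x y) :
    (σ * Equiv.swap a b).SameCycle x y := by
  set f := σ * Equiv.swap a b with hf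
  obtain ⟨i, -, rfl⟩ := h.exists_pow_eq'
  clear h
  induction i with
  | zero => simpa using SameCycle.refl f x
  | succ k ih =>
    rw [pow_succ_apply]
    set z := (σ ^ k) x with hz
    have hxz : σ.SameCycle x z := ⟨k, by rw [zpow_natCast]⟩
    have hza : z ≠ a := fun e => hxa (e ▸ hxz)
    have hzb : z ≠ b := fun e => hxa ((e ▸ hxz).trans hab.symm)
    have hfz : f z = σ z := by rw [hf, mul_apply, Equiv.swap_apply_of_ne_of_ne hza hzb]
    exact ih.trans (by rw [← hfz]; exact ⟨1, by simp⟩)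

private lemma not_sameCycle_mul_swap {σ : Perm (Fin n)} {a b : Fin n} (hab : a ≠ b)
    (h : σ.SameCycle a b) : ¬ (σ * Equiv.swap a b).SameCycle a b := by
  set f := σ * Equiv.swap a b with hf
  have hfa : ∀ z, z ≠ a → z ≠ b → f z = σ z := fun z h1 h2 => by
    rw [hf, mul_apply, Equiv.swap_apply_of_ne_of_ne h1 h2]
  have hfb : f a = σ b := by rw [hf, mul_apply, Equiv.swap_apply_left]
  have hex : ∃ i : ℕ, (σ ^ (i + 1)) b = a := by
    obtain ⟨i, -, hi⟩ := h.symm.exists_pow_eq'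
    match i, hi with
    | 0, hi => exact absurd (show b = a by simpa using hi).symm hab
    | (m+1), hi => exact ⟨m, hi⟩
  set j := Nat.find hex + 1 with hjdef
  have hj0 : 0 < j := by omega
  have hj1 : (σ ^ j) b = a := Nat.find_spec hex
  have hjmin : ∀ m, 1 ≤ m → m < j → (σ ^ m) b ≠ a := by
    intro m h1 h2 hc
    have h3 := Nat.find_min hex (m := m - 1) (by omega)
    apply h3; rwa [Nat.sub_add_cancel h1]
  have hnotb : ∀ m, 1 ≤ m → m < j → (σ ^ m) b ≠ b := by
    intro m h1 h2 hc
    apply hjmin (j - m) (by omega) (by omega)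
    have h4 : (σ ^ (j - m)) ((σ ^ m) b) = (σ ^ j) b := by
      rw [← mul_apply, ← pow_add]; congr 2; omega
    rw [hc] at h4; rw [h4, hj1]
  have key : ∀ k, 1 ≤ k → k ≤ j → (f ^ k) a = (σ ^ k) b := by
    intro k
    induction k with
    | zero => omega
    | succ m ih =>
      intro _ h2
      rcases Nat.eq_zero_or_pos m with rfl | hm
      · simpa using hfb
      · rw [pow_succ_apply, ih hm (by omega),
          hfa _ (hjmin m hm (by omega)) (hnotb m hm (by omega)), ← pow_succ_apply]
  have hfj : (f ^ j) a = a := by rw [key j hj0 le_rfl, hj1]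
  have hperiod : ∀ q : ℕ, (f ^ (j * q)) a = a := by
    intro q; induction q with
    | zero => simp
    | succ p ih =>
      rw [Nat.mul_succ, pow_add, mul_apply, hfj, ih]
  intro hcon
  obtain ⟨i, -, hi⟩ := hcon.exists_pow_eq'
  have hieq : i = i % j + j * (i / j) := (Nat.mod_add_div i j).symm
  rw [hieq, pow_add, mul_apply, hperiod] at hi
  rcases Nat.eq_zero_or_pos (i % j) with h0 | h0
  · rw [h0] at hi; exact hab (by simpa using hi)
  · have hlt : i % j < j := Nat.mod_lt _ hj0
    rw [key (i % j) h0 (le_of_lt hlt)] at hi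
    exact hnotb (i % j) h0 hlt hi

private lemma sameCycle_mul_swap_self {σ : Perm (Fin n)} {a b : Fin n}
    (h : ¬ σ.SameCycle a b) : (σ * Equiv.swap a b).SameCycle a b := by
  set f := σ * Equiv.swap a b with hf
  have hab : a ≠ b := fun e => h (e ▸ SameCycle.refl σ a)
  have hfa : ∀ z, z ≠ a → z ≠ b → f z = σ z := fun z h1 h2 => by
    rw [hf, mul_apply, Equiv.swap_apply_of_ne_of_ne h1 h2]
  have hfb : f b = σ a := by rw [hf, mul_apply, Equiv.swap_apply_right]
  have hex : ∃ i : ℕ, (σ ^ (i + 1)) a = a := by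
    refine ⟨orderOf σ - 1, ?_⟩
    have h1 : orderOf σ - 1 + 1 = orderOf σ := by have := orderOf_pos σ; omega
    rw [h1, pow_orderOf_eq_one]; rfl
  set j := Nat.find hex + 1 with hjdef
  have hj0 : 0 < j := by omega
  have hj1 : (σ ^ j) a = a := Nat.find_spec hex
  have hjmin : ∀ m, 1 ≤ m → m < j → (σ ^ m) a ≠ a := by
    intro m h1 h2 hc
    have h3 := Nat.find_min hex (m := m - 1) (by omega)
    apply h3; rwa [Nat.sub_add_cancel h1]
  have key : ∀ k, 1 ≤ k → k ≤ j → (f ^ k) b = (σ ^ k) a := by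
    intro k
    induction k with
    | zero => omega
    | succ m ih =>
      intro _ h2
      rcases Nat.eq_zero_or_pos m with rfl | hm
      · simpa using hfb
      · have hzb : (σ ^ m) a ≠ b := fun e => h ⟨m, by rw [zpow_natCast, e]⟩
        rw [pow_succ_apply, ih hm (by omega),
          hfa _ (hjmin m hm (by omega)) hzb, ← pow_succ_apply]
  have hfj : (f ^ j) b = a := by rw [key j hj0 le_rfl, hj1]
  exact Equiv.Perm.SameCycle.symm (show f.SameCycle b a from ⟨j, by rw [zpow_natCast, hfj]⟩)

end Orbit

section Count

lemma nQuot_mul_swap {σ : Perm (Fin n)} {a b : Fin n} (hab : a ≠ b) (h : σ.SameCycle a b) :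
    nQuot (σ * Equiv.swap a b) = nQuot σ + 1 := by
  set f := σ * Equiv.swap a b with hf
  have hL1 : ∀ {x y : Fin n}, f.SameCycle x y → σ.SameCycle x y :=
    fun hxy => sameCycle_mul_swap_refine h hxy
  have hL4 : ¬ f.SameCycle a b := not_sameCycle_mul_swap hab h
  have wd1 : ∀ x y : Fin n, (scSetoid f).r x y →
      (if f.SameCycle b x then (none : Option (Quotient (scSetoid σ)))
        else some (Quotient.mk (scSetoid σ) x)) =
      (if f.SameCycle b y then none else some (Quotient.mk (scSetoid σ) y)) := by
    intro x y hxy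
    by_cases hbx : f.SameCycle b x
    · rw [if_pos hbx, if_pos (hbx.trans hxy)]
    · rw [if_neg hbx, if_neg (fun hby => hbx (hby.trans hxy.symm))]
      exact congrArg some (Quotient.sound (hL1 hxy))
  have wd2 : ∀ x y : Fin n, (scSetoid σ).r x y →
      (if f.SameCycle b x then Quotient.mk (scSetoid f) a else Quotient.mk (scSetoid f) x) =
      (if f.SameCycle b y then Quotient.mk (scSetoid f) a else Quotient.mk (scSetoid f) y) := by
    have hval : ∀ z : Fin n, σ.SameCycle z a →
        (if f.SameCycle b z then Quotient.mk (scSetoid f) a else Quotient.mk (scSetoid f) z) =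
        Quotient.mk (scSetoid f) a := by
      intro z hza
      by_cases hbz : f.SameCycle b z
      · rw [if_pos hbz]
      · rw [if_neg hbz]
        rcases sameCycle_cover (b := b) hza.symm with h' | h'
        · exact Quotient.sound (Equiv.Perm.SameCycle.symm h')
        · exact absurd h' hbz
    intro x y hxy
    by_cases hxa : σ.SameCycle x a
    · rw [hval x hxa, hval y ((Equiv.Perm.SameCycle.symm hxy).trans hxa)]
    · have hya : ¬ σ.SameCycle y a := fun hy => hxa (hxy.trans hy)
      have hbx : ¬ f.SameCycle b x := fun hbx => hxa ((hL1 hbx).symm.trans (h.symm))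
      have hby : ¬ f.SameCycle b y := fun hby => hya ((hL1 hby).symm.trans (h.symm))
      rw [if_neg hbx, if_neg hby]
      exact Quotient.sound (sameCycle_mul_swap_of_not_mem h hxa hxy)
  let e : Quotient (scSetoid f) ≃ Option (Quotient (scSetoid σ)) :=
    { toFun := Quotient.lift _ wd1
      invFun := fun o => o.elim (Quotient.mk (scSetoid f) b) (Quotient.lift _ wd2)
      left_inv := by
        intro q
        induction q using Quotient.inductionOn with | _ x =>
        by_cases hbx : f.SameCycle b x
        · simp only [Quotient.lift_mk, if_pos hbx, Option.elim]
          exact Quotient.sound hbx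
        · simp only [Quotient.lift_mk, if_neg hbx, Option.elim]
      right_inv := by
        intro o
        match o with
        | none =>
          simp only [Option.elim, Quotient.lift_mk]
          rw [if_pos (SameCycle.refl f b)]
        | some q =>
          induction q using Quotient.inductionOn with | _ x =>
          simp only [Option.elim, Quotient.lift_mk]
          by_cases hbx : f.SameCycle b x
          · rw [if_pos hbx]
            simp only [Quotient.lift_mk]
            rw [if_neg (fun hba => hL4 (Equiv.Perm.SameCycle.symm hba))]
            exact congrArg some (Quotient.sound ((h.trans (hL1 hbx))))
          · rw [if_neg hbx]
            simp only [Quotient.lift_mk]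
            rw [if_neg hbx] }
  rw [nQuot, nQuot, Fintype.card_congr e, Fintype.card_option]

lemma numCycles_mul_swap_sameCycle {σ : Perm (Fin n)} {a b : Fin n} (hab : a ≠ b)
    (h : σ.SameCycle a b) :
    numCycles (σ * Equiv.swap a b) = numCycles σ + 1 := by
  rw [numCycles_eq_nQuot, numCycles_eq_nQuot]
  exact nQuot_mul_swap hab h

lemma numCycles_mul_swap_not_sameCycle {σ : Perm (Fin n)} {a b : Fin n} (hab : a ≠ b)
    (h : ¬ σ.SameCycle a b) :
    numCycles σ = numCycles (σ * Equiv.swap a b) + 1 := by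
  have h2 := sameCycle_mul_swap_self h
  have h3 := numCycles_mul_swap_sameCycle hab h2
  rwa [mul_assoc, Equiv.swap_mul_self, mul_one] at h3

lemma numCycles_mul_swap_le {σ : Perm (Fin n)} {a b : Fin n} (hab : a ≠ b) :
    numCycles (σ * Equiv.swap a b) ≤ numCycles σ + 1 := by
  by_cases h : σ.SameCycle a b
  · exact le_of_eq (numCycles_mul_swap_sameCycle hab h)
  · have := numCycles_mul_swap_not_sameCycle hab h
    omega

end Count

section Geometry

private lemma fin_val_add_one [NeZero n] {x : Fin n} (h : x.val + 1 < n) : (x + 1).val = x.val + 1 := by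
  have hn : 1 < n := by omega
  have h1 : (1 : Fin n).val = 1 := by
    rw [Fin.val_one']; exact Nat.mod_eq_of_lt hn
  rw [Fin.val_add, h1, Nat.mod_eq_of_lt h]

private lemma finRotate_apply' {m : ℕ} [NeZero m] (x : Fin m) : finRotate m x = x + 1 := by
  cases m with
  | zero => exact x.elim0
  | succ k => exact finRotate_succ_apply x

private lemma not_sameCycle_of_invariant {f : Perm (Fin n)} {P : Fin n → Prop} [DecidablePred P]
    (hP : ∀ x, P x → P (f x)) {x y : Fin n} (hx : ¬ P x) (hy : P y) : ¬ f.SameCycle x y := by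
  have hiff : ∀ z, P (f z) ↔ P z := by
    have himg : Finset.image f (Finset.univ.filter P) = Finset.univ.filter P := by
      apply Finset.eq_of_subset_of_card_le
      · intro w hw
        obtain ⟨z, hz, rfl⟩ := Finset.mem_image.1 hw
        simp only [Finset.mem_filter, Finset.mem_univ, true_and] at hz ⊢
        exact hP _ hz
      · rw [Finset.card_image_of_injective _ f.injective]
    intro z
    constructor
    · intro hz
      have h1 : f z ∈ Finset.image f (Finset.univ.filter P) := by
        rw [himg]; simp [hz]
      obtain ⟨w, hw, he⟩ := Finset.mem_image.1 h1
      have := f.injective he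
      subst this
      simpa using hw
    · exact hP z
  have hpow : ∀ (i : ℕ) (z : Fin n), (P ((f ^ i) z) ↔ P z) := by
    intro i
    induction i with
    | zero => simp
    | succ k ih =>
      intro z
      rw [pow_succ, mul_apply]
      rw [ih (f z), hiff z]
  intro hxy
  obtain ⟨i, -, rfl⟩ := hxy.exists_pow_eq'
  exact hx ((hpow i x).1 hy)

private lemma sameCycle_rotate_of_fixed [NeZero n] {g : Perm (Fin n)} {a b : Fin n} (hab : a < b)
    (hfix : ∀ x : Fin n, a ≤ x → x ≤ b → g x = x) :
    (finRotate n * g).SameCycle a b := by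
  set f := finRotate n * g with hf
  have key : ∀ k, a.val + k ≤ b.val → ((f ^ k) a).val = a.val + k := by
    intro k
    induction k with
    | zero => simp
    | succ m ih =>
      intro hm
      have ihm := ih (by omega)
      rw [pow_succ_apply]
      set z := (f ^ m) a with hz
      have hz1 : a ≤ z := by rw [Fin.le_def, ihm]; omega
      have hz2 : z ≤ b := by rw [Fin.le_def, ihm]; omega
      have h1 : f z = z + 1 := by rw [hf, mul_apply, hfix z hz1 hz2, finRotate_apply']
      have h2 : z.val + 1 < n := by
        have := b.isLt
        rw [ihm]; omega
      rw [h1, fin_val_add_one h2, ihm]; omega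
  have hb : (f ^ (b.val - a.val)) a = b := by
    have h1 := key (b.val - a.val) (by omega)
    have h2 : a.val ≤ b.val := le_of_lt hab
    apply Fin.eq_of_val_eq
    rw [h1]; omega
  exact ⟨(b.val - a.val : ℕ), by rw [zpow_natCast, hb]⟩

private lemma not_sameCycle_chord [NeZero n] {π : Perm (Fin n)} (hinv : π * π = 1)
    (hNC : IsNonCrossingPairing π) {p q r s : Fin n}
    (hqs : π q = s) (h1 : p < q) (h2 : q < r) (h3 : r < s) :
    ¬ (finRotate n * π).SameCycle p r := by
  have hsq : π s = q := by rw [← hqs, ← mul_apply, hinv, one_apply]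
  have hqs' : q < s := lt_trans h2 h3
  have hsn := s.isLt
  apply not_sameCycle_of_invariant (P := fun x => q < x ∧ x ≤ s)
  · rintro x ⟨hx1, hx2⟩
    rcases eq_or_ne x s with rfl | hxs
    · rw [mul_apply, hsq, finRotate_apply']
      have hv : (q + 1).val = q.val + 1 := fin_val_add_one (by rw [Fin.lt_def] at hqs'; omega)
      constructor
      · rw [Fin.lt_def, hv]; omega
      · rw [Fin.le_def, hv]; rw [Fin.lt_def] at hqs'; omega
    · have hxlt : x < s := lt_of_le_of_ne hx2 hxs
      set y := π x with hy
      have hyx : π y = x := by rw [hy, ← mul_apply, hinv, one_apply]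
      have hyval : q < y ∧ y < s ∨ y = x := by
        rcases eq_or_ne y x with he | hne
        · right; exact he
        left
        have hyq : y ≠ q := fun e => by
          rw [e, hqs] at hyx
          rw [← hyx] at hxs
          exact hxs rfl
        have hys : y ≠ s := fun e => by
          rw [e, hsq] at hyx
          rw [← hyx] at hx1
          exact lt_irrefl _ hx1
        rcases lt_trichotomy y q with hlt | he | hgt
        · exact absurd ⟨y, q, x, s, hlt, hx1, hxlt, hyx, hqs⟩ hNC
        · exact absurd he hyq
        · rcases lt_trichotomy y s with h' | h'' | h'''
          · exact ⟨hgt, h'⟩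
          · exact absurd h'' hys
          · exact absurd ⟨q, x, s, y, hx1, hxlt, h''', hqs, hy.symm⟩ hNC
      have hyb : q ≤ y ∧ y < s := by
        rcases hyval with ⟨u, v⟩ | he
        · exact ⟨le_of_lt u, v⟩
        · rw [he]; exact ⟨le_of_lt hx1, hxlt⟩
      rw [mul_apply, ← hy, finRotate_apply']
      have hyn : y.val + 1 < n := by
        have := hyb.2; rw [Fin.lt_def] at this; omega
      have hv := fin_val_add_one hyn
      constructor
      · rw [Fin.lt_def, hv]
        have := hyb.1; rw [Fin.le_def] at this; omega
      · rw [Fin.le_def, hv]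
        have := hyb.2; rw [Fin.lt_def] at this; omega
  · rintro ⟨hc, -⟩
    exact absurd hc (not_lt.2 (le_of_lt h1))
  · exact ⟨h2, le_of_lt h3⟩

end Geometry
section Invol

private lemma swap_pair_comm {π : Perm (Fin n)} {a b : Fin n} (ha : π a = b) (hb : π b = a) :
    π * Equiv.swap a b = Equiv.swap a b * π := by
  apply Equiv.ext
  intro x
  simp only [mul_apply]
  rcases eq_or_ne x a with rfl | hxa
  · rw [Equiv.swap_apply_left, hb, ha, Equiv.swap_apply_right]
  rcases eq_or_ne x b with rfl | hxb
  · rw [Equiv.swap_apply_right, ha, hb, Equiv.swap_apply_left]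
  · rw [Equiv.swap_apply_of_ne_of_ne hxa hxb,
      Equiv.swap_apply_of_ne_of_ne
        (fun e => hxb (by rw [← hb] at e; exact π.injective e))
        (fun e => hxa (by rw [← ha] at e; exact π.injective e))]

private lemma mul_swap_invol {π : Perm (Fin n)} {a b : Fin n} (hinv : π * π = 1)
    (ha : π a = b) (hb : π b = a) :
    (π * Equiv.swap a b) * (π * Equiv.swap a b) = 1 := by
  have hc := swap_pair_comm ha hb
  have h1 : π * Equiv.swap a b * (π * Equiv.swap a b)
      = (π * π) * (Equiv.swap a b * Equiv.swap a b) := by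
    rw [mul_assoc, ← mul_assoc (Equiv.swap a b) π (Equiv.swap a b), ← hc,
      mul_assoc, ← mul_assoc, ← mul_assoc]
  rw [h1, hinv, Equiv.swap_mul_self, one_mul]

private lemma support_mul_swap {π : Perm (Fin n)} {a b : Fin n} (hne : a ≠ b)
    (ha : π a = b) (hb : π b = a) :
    (π * Equiv.swap a b).support = π.support \ {a, b} := by
  ext x
  simp only [Equiv.Perm.mem_support, Finset.mem_sdiff, Finset.mem_insert, Finset.mem_singleton,
    mul_apply]
  rcases eq_or_ne x a with rfl | hxa
  · simp [Equiv.swap_apply_left, hb]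
  rcases eq_or_ne x b with rfl | hxb
  · simp [Equiv.swap_apply_right, ha]
  · rw [Equiv.swap_apply_of_ne_of_ne hxa hxb]
    simp [hxa, hxb]

private lemma card_support_mul_swap {π : Perm (Fin n)} {a b : Fin n} (hne : a ≠ b)
    (ha : π a = b) (hb : π b = a) :
    (π * Equiv.swap a b).support.card = π.support.card - 2 ∧ 2 ≤ π.support.card := by
  have hsub : ({a, b} : Finset (Fin n)) ⊆ π.support := by
    intro x hx
    simp only [Finset.mem_insert, Finset.mem_singleton] at hx
    rcases hx with rfl | rfl
    · exact mem_support.2 (by rw [ha]; exact hne.symm)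
    · exact mem_support.2 (by rw [hb]; exact hne)
  have hc2 : ({a, b} : Finset (Fin n)).card = 2 := Finset.card_pair hne
  constructor
  · rw [support_mul_swap hne ha hb, Finset.card_sdiff_of_subset hsub, hc2]
  · rw [← hc2]; exact Finset.card_le_card hsub

private lemma not_nc_mul_swap {π : Perm (Fin n)} {a b : Fin n}
    (ha : π a = b) (hb : π b = a)
    (h : ¬ IsNonCrossingPairing (π * Equiv.swap a b)) : ¬ IsNonCrossingPairing π := by
  rw [IsNonCrossingPairing, not_not] at h ⊢
  obtain ⟨p, q, r, s, h1, h2, h3, hpr, hqs⟩ := h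
  have hfixa : (π * Equiv.swap a b) a = a := by rw [mul_apply, Equiv.swap_apply_left, hb]
  have hfixb : (π * Equiv.swap a b) b = b := by rw [mul_apply, Equiv.swap_apply_right, ha]
  have hpa : p ≠ a := by rintro rfl; rw [hfixa] at hpr; exact absurd hpr (ne_of_lt (lt_trans h1 h2))
  have hpb : p ≠ b := by rintro rfl; rw [hfixb] at hpr; exact absurd hpr (ne_of_lt (lt_trans h1 h2))
  have hqa : q ≠ a := by rintro rfl; rw [hfixa] at hqs; exact absurd hqs (ne_of_lt (lt_trans h2 h3))
  have hqb : q ≠ b := by rintro rfl; rw [hfixb] at hqs; exact absurd hqs (ne_of_lt (lt_trans h2 h3))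
  rw [mul_apply, Equiv.swap_apply_of_ne_of_ne hpa hpb] at hpr
  rw [mul_apply, Equiv.swap_apply_of_ne_of_ne hqa hqb] at hqs
  exact ⟨p, q, r, s, h1, h2, h3, hpr, hqs⟩

private lemma nc_mul_swap_of_interior_fixed {π : Perm (Fin n)} {a b : Fin n}
    (hinv : π * π = 1) (hab : a < b) (ha : π a = b)
    (hfix : ∀ x, a < x → x < b → π x = x)
    (h : ¬ IsNonCrossingPairing π) : ¬ IsNonCrossingPairing (π * Equiv.swap a b) := by
  have hb : π b = a := by rw [← ha, ← mul_apply, hinv, one_apply]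
  rw [IsNonCrossingPairing, not_not] at h ⊢
  obtain ⟨p, q, r, s, h1, h2, h3, hpr, hqs⟩ := h
  have hpa : p ≠ a := by
    rintro rfl
    rw [ha] at hpr
    have hq : π q = q := hfix q h1 (hpr ▸ h2)
    rw [hqs] at hq
    exact absurd hq.symm (ne_of_lt (lt_trans h2 h3))
  have hpb : p ≠ b := by
    rintro rfl
    rw [hb] at hpr
    exact absurd hab (not_lt.2 (le_of_lt (hpr ▸ lt_trans h1 h2)))
  have hqa : q ≠ a := by
    rintro rfl
    rw [ha] at hqs
    have hr : π r = r := hfix r h2 (hqs ▸ h3)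
    have : p = r := by
      apply π.injective
      rw [hpr, hr]
    exact absurd this (ne_of_lt (lt_trans h1 h2))
  have hqb : q ≠ b := by
    rintro rfl
    rw [hb] at hqs
    exact absurd hab (not_lt.2 (le_of_lt (hqs ▸ lt_trans h2 h3)))
  refine ⟨p, q, r, s, h1, h2, h3, ?_, ?_⟩
  · rw [mul_apply, Equiv.swap_apply_of_ne_of_ne hpa hpb, hpr]
  · rw [mul_apply, Equiv.swap_apply_of_ne_of_ne hqa hqb, hqs]

private lemma exists_crossing {π : Perm (Fin n)} (hinv : π * π = 1) (hne : π ≠ 1)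
    (hA : ¬ ∃ a b : Fin n, a < b ∧ π a = b ∧ ∀ x, a < x → x < b → π x = x) :
    ∃ p q r s : Fin n, p < q ∧ q < r ∧ r < s ∧ π p = r ∧ π q = s := by
  classical
  set S := Finset.univ.filter (fun a : Fin n => a < π a) with hS
  have hSne : S.Nonempty := by
    have hx : ∃ x, π x ≠ x := by
      by_contra hall
      push_neg at hall
      exact hne (Equiv.ext hall)
    obtain ⟨x, hx⟩ := hx
    rcases lt_or_gt_of_ne (Ne.symm hx) with h | h
    · exact ⟨x, by simp [hS, h]⟩
    · refine ⟨π x, ?_⟩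
      simp only [hS, Finset.mem_filter, Finset.mem_univ, true_and]
      have hxx : π (π x) = x := by rw [← mul_apply, hinv, one_apply]
      rw [hxx]; exact h
  obtain ⟨a, haS, hmin⟩ := S.exists_min_image (fun a => (π a).val - a.val) hSne
  have haa : a < π a := by
    rw [hS] at haS
    exact (Finset.mem_filter.1 haS).2
  set b := π a with hbdef
  have hba : π b = a := by rw [hbdef, ← mul_apply, hinv, one_apply]
  have hmoved : ∃ c, a < c ∧ c < b ∧ π c ≠ c := by
    by_contra hall
    push_neg at hall
    exact hA ⟨a, b, haa, hbdef.symm, fun x hx1 hx2 => hall x hx1 hx2⟩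
  obtain ⟨c, hac, hcb, hc⟩ := hmoved
  have hdc : π (π c) = c := by rw [← mul_apply, hinv, one_apply]
  have hda : π c ≠ a := by
    intro e
    rw [e] at hdc
    exact (ne_of_lt hcb) (by rw [hbdef, hdc])
  have hdb : π c ≠ b := by
    intro e
    rw [e, hba] at hdc
    exact (ne_of_lt hac) hdc
  have hvac : a.val < c.val := hac
  have hvcb : c.val < b.val := hcb
  have hnotin : ¬ (a < π c ∧ π c < b) := by
    rintro ⟨hd1, hd2⟩
    have hv1 : a.val < (π c).val := hd1
    have hv2 : (π c).val < b.val := hd2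
    rcases lt_or_gt_of_ne hc with hlt | hgt
    · have hdS : π c ∈ S := by
        simp only [hS, Finset.mem_filter, Finset.mem_univ, true_and]
        rw [hdc]; exact hlt
      have hm := hmin (π c) hdS
      rw [hdc] at hm
      have hv3 : (π c).val < c.val := hlt
      omega
    · have hcS : c ∈ S := by
        simp only [hS, Finset.mem_filter, Finset.mem_univ, true_and]
        exact hgt
      have hm := hmin c hcS
      have hv3 : c.val < (π c).val := hgt
      omega
  have hout : π c < a ∨ b < π c := by
    rcases lt_trichotomy (π c) a with h' | h' | h'
    · left; exact h'
    · exact absurd h' hda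
    · rcases lt_trichotomy (π c) b with h'' | h'' | h''
      · exact absurd ⟨h', h''⟩ hnotin
      · exact absurd h'' hdb
      · right; exact h''
  rcases hout with h' | h'
  · exact ⟨π c, a, c, b, h', hac, hcb, hdc, hbdef.symm⟩
  · exact ⟨a, c, b, π c, hac, hcb, h', hbdef.symm, rfl⟩

private lemma numCycles_finRotate_eq {m : ℕ} (hm : 0 < m) : numCycles (finRotate m) = 1 := by
  match m, hm with
  | 1, _ =>
    have h1 : finRotate 1 = (1 : Perm (Fin 1)) := finRotate_one
    rw [h1]
    simp [numCycles, cycleType_one, support_one]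
  | (k+2), _ =>
    have h1 : (finRotate (k+2)).cycleType = {k+2} := cycleType_finRotate
    have h2 : (finRotate (k+2)).support = Finset.univ := support_finRotate
    rw [numCycles, h1, h2]
    simp

end Invol
section Main

theorem gen_bound {n : ℕ} (hn : 0 < n) :
    ∀ (π : Perm (Fin n)), π * π = 1 →
      numCycles (finRotate n * π) ≤ π.support.card / 2 + 1 ∧
      (numCycles (finRotate n * π) = π.support.card / 2 + 1 ↔ IsNonCrossingPairing π) := by
  haveI : NeZero n := ⟨by omega⟩
  suffices H : ∀ (k : ℕ) (π : Perm (Fin n)), π * π = 1 → π.support.card = k →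
      (numCycles (finRotate n * π) ≤ k / 2 + 1 ∧
       (numCycles (finRotate n * π) = k / 2 + 1 ↔ IsNonCrossingPairing π)) by
    intro π hπ
    exact H _ π hπ rfl
  intro k
  induction k using Nat.strong_induction_on with
  | _ k ih =>
  intro π hπ2 hk
  rcases eq_or_ne π 1 with rfl | hπ1
  · rw [support_one, Finset.card_empty] at hk
    subst hk
    rw [mul_one, numCycles_finRotate_eq hn]
    have hnc : IsNonCrossingPairing (1 : Perm (Fin n)) := by
      rintro ⟨a, b, c, d, h1, h2, h3, h4, -⟩
      rw [one_apply] at h4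
      exact (ne_of_lt (lt_trans h1 h2)) h4
    exact ⟨by omega, iff_of_true (by omega) hnc⟩
  · by_cases hA : ∃ a b : Fin n, a < b ∧ π a = b ∧ ∀ x, a < x → x < b → π x = x
    · obtain ⟨a, b, hab, ha, hfixint⟩ := hA
      have hbne : a ≠ b := ne_of_lt hab
      have hb : π b = a := by rw [← ha, ← mul_apply, hπ2, one_apply]
      set π' := π * Equiv.swap a b with hπ'def
      have hπ'2 : π' * π' = 1 := mul_swap_invol hπ2 ha hb
      obtain ⟨hcard', hk2⟩ := card_support_mul_swap hbne ha hb
      rw [hk] at hcard' hk2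
      have IH := ih (k - 2) (by omega) π' hπ'2 hcard'
      have hfix : ∀ x : Fin n, a ≤ x → x ≤ b → π' x = x := by
        intro x h1 h2
        rcases eq_or_ne x a with rfl | hxa
        · rw [hπ'def, mul_apply, Equiv.swap_apply_left, hb]
        rcases eq_or_ne x b with rfl | hxb
        · rw [hπ'def, mul_apply, Equiv.swap_apply_right, ha]
        · rw [hπ'def, mul_apply, Equiv.swap_apply_of_ne_of_ne hxa hxb]
          exact hfixint x (lt_of_le_of_ne h1 (Ne.symm hxa)) (lt_of_le_of_ne h2 hxb)
      have hsc : (finRotate n * π').SameCycle a b := sameCycle_rotate_of_fixed hab hfix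
      have heq : finRotate n * π = (finRotate n * π') * Equiv.swap a b := by
        rw [hπ'def, mul_assoc (finRotate n), mul_assoc, Equiv.swap_mul_self, mul_one]
      have hnum : numCycles (finRotate n * π) = numCycles (finRotate n * π') + 1 := by
        rw [heq]
        exact numCycles_mul_swap_sameCycle hbne hsc
      have hNCiff : IsNonCrossingPairing π ↔ IsNonCrossingPairing π' := by
        constructor
        · intro h
          by_contra h'
          exact (not_nc_mul_swap ha hb (hπ'def ▸ h')) h
        · intro h
          by_contra h'
          exact (nc_mul_swap_of_interior_fixed hπ2 hab ha hfixint h') (hπ'def ▸ h)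
      have hIH1 := IH.1
      constructor
      · omega
      · rw [hnum, hNCiff, ← IH.2]
        constructor <;> intro h <;> omega
    · obtain ⟨p, q, r, s, h1, h2, h3, hpr, hqs⟩ := exists_crossing hπ2 hπ1 hA
      have hcross : ¬ IsNonCrossingPairing π := fun h => h ⟨p, q, r, s, h1, h2, h3, hpr, hqs⟩
      have hprne : p ≠ r := ne_of_lt (lt_trans h1 h2)
      have hrp : π r = p := by rw [← hpr, ← mul_apply, hπ2, one_apply]
      set π' := π * Equiv.swap p r with hπ'def
      have hπ'2 : π' * π' = 1 := mul_swap_invol hπ2 hpr hrp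
      obtain ⟨hcard', hk2⟩ := card_support_mul_swap hprne hpr hrp
      rw [hk] at hcard' hk2
      have IH := ih (k - 2) (by omega) π' hπ'2 hcard'
      have hπ'q : π' q = s := by
        rw [hπ'def, mul_apply, Equiv.swap_apply_of_ne_of_ne (ne_of_gt h1) (ne_of_lt h2), hqs]
      have heq : finRotate n * π = (finRotate n * π') * Equiv.swap p r := by
        rw [hπ'def, mul_assoc (finRotate n), mul_assoc, Equiv.swap_mul_self, mul_one]
      have hle : numCycles (finRotate n * π) ≤ numCycles (finRotate n * π') + 1 := by
        rw [heq]; exact numCycles_mul_swap_le hprne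
      by_cases hNC' : IsNonCrossingPairing π'
      · have hval : numCycles (finRotate n * π') = (k - 2) / 2 + 1 := IH.2.mpr hNC'
        have hnsc : ¬ (finRotate n * π').SameCycle p r :=
          not_sameCycle_chord hπ'2 hNC' hπ'q h1 h2 h3
        have hnum : numCycles (finRotate n * π') = numCycles (finRotate n * π) + 1 := by
          have h5 := numCycles_mul_swap_not_sameCycle hprne hnsc
          rwa [← heq] at h5
        constructor
        · omega
        · exact iff_of_false (by omega) hcross
      · have hlt : numCycles (finRotate n * π') ≤ (k - 2) / 2 := by
          have h5 := IH.1
          have hne' : numCycles (finRotate n * π') ≠ (k - 2) / 2 + 1 :=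
            fun e => hNC' (IH.2.mp e)
          omega
        constructor
        · omega
        · exact iff_of_false (by omega) hcross

end Main


/-- For `ℓ ≥ 1`, `γ = (1,2,…,2ℓ)` the full cycle and `π` a pair partition of
`{1, …, 2ℓ}` (a fixed-point-free involution), the number of cycles of `γ ∘ π`
satisfies `#(γ∘π) ≤ ℓ + 1`, with equality iff `π` is non-crossing. -/
theorem numCycles_cycle_mul_pairing_le {ℓ : ℕ} (hℓ : 1 ≤ ℓ)
    (π : Equiv.Perm (Fin (2 * ℓ))) (hπ : IsPairing π) :
    numCycles (finRotate (2 * ℓ) * π) ≤ ℓ + 1 ∧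
      (numCycles (finRotate (2 * ℓ) * π) = ℓ + 1 ↔ IsNonCrossingPairing π) := by
  have hn : 0 < 2 * ℓ := by omega
  have hsupp : π.support = Finset.univ :=
    Finset.eq_univ_iff_forall.2 (fun x => mem_support.2 (hπ.2 x))
  have hcard : π.support.card = 2 * ℓ := by rw [hsupp, Finset.card_univ, Fintype.card_fin]
  have H := gen_bound hn π hπ.1
  rw [hcard] at H
  have h2 : 2 * ℓ / 2 = ℓ := by omega
  rwa [h2] at H
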